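/- If x ∈ M satisfies 1 − q(x) − 2x⁰ ≠ 0, then i·ψ(x) = ψ(x′), where x′ ∈ M is given by x′⁰ = (1 + q(x))/(1 − q(x) − 2x⁰) and (x′¹, x′², x′³) = (2x¹, 2x², 2x³)/(1 − q(x) − 2x⁰). Thus the left translation U ↦ iU of U(2) corresponds, on Minkowski space, to this explicit (conformal) transformation. -/

import Mathlib

noncomputable section

open Matrix Complex

abbrev Mat2 := Matrix (Fin 2) (Fin 2) ℂ

/-- Minkowski quadratic form on ℝ⁴. -/
def mq (x : Fin 4 → ℝ) : ℝ := -(x 0)^2 + (x 1)^2 + (x 2)^2 + (x 3)^2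

/-- The isomorphism of Minkowski space with Hermitian 2×2 matrices. -/
def mphi (x : Fin 4 → ℝ) : Mat2 :=
  !![(x 0 : ℂ) + (x 3 : ℂ), (x 1 : ℂ) - Complex.I * (x 2 : ℂ);
     (x 1 : ℂ) + Complex.I * (x 2 : ℂ), (x 0 : ℂ) - (x 3 : ℂ)]

/-- The Cayley transform. -/
def cayley (X : Mat2) : Mat2 := (X - Complex.I • 1) * (X + Complex.I • 1)⁻¹

/-- ψ = u ∘ φ : M → U(2). -/
def mpsi (x : Fin 4 → ℝ) : Mat2 := cayley (mphi x)

def mdet (y : Fin 4 → ℝ) : ℂ := -((1 + mq y : ℝ) : ℂ) + 2 * I * (y 0)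

lemma mdet_ne (y : Fin 4 → ℝ) : mdet y ≠ 0 := by
  intro hc
  have h1 : -(1 + mq y) = 0 := by simpa [mdet] using congrArg Complex.re hc
  have h2 : (2:ℝ) * y 0 = 0 := by simpa [mdet] using congrArg Complex.im hc
  simp [mq] at h1
  nlinarith [sq_nonneg (y 1), sq_nonneg (y 2), sq_nonneg (y 3), sq_nonneg (y 0)]

def mnum (y : Fin 4 → ℝ) : Mat2 :=
  !![1 - ((mq y : ℝ) : ℂ) + 2*I*(y 3), 2*I*((y 1:ℂ) - I*(y 2));
     2*I*((y 1:ℂ) + I*(y 2)), 1 - ((mq y : ℝ) : ℂ) - 2*I*(y 3)]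

lemma mpsi_eq (y : Fin 4 → ℝ) : mpsi y = (mdet y)⁻¹ • mnum y := by
  have hA : mphi y + Complex.I • 1 = !![(y 0:ℂ)+y 3+I, (y 1:ℂ)-I*y 2; (y 1:ℂ)+I*y 2, (y 0:ℂ)-y 3+I] := by
    ext i j; fin_cases i <;> fin_cases j <;> simp [mphi, Matrix.one_fin_two]
  have hB : mphi y - Complex.I • 1 = !![(y 0:ℂ)+y 3-I, (y 1:ℂ)-I*y 2; (y 1:ℂ)+I*y 2, (y 0:ℂ)-y 3-I] := by
    ext i j; fin_cases i <;> fin_cases j <;> simp [mphi, Matrix.one_fin_two]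
  have hd : ((y 0:ℂ)+y 3+I)*((y 0:ℂ)-y 3+I) - ((y 1:ℂ)-I*y 2)*((y 1:ℂ)+I*y 2) = mdet y := by
    simp only [mdet, mq]
    push_cast
    linear_combination ((y 2:ℂ)^2 + 1) * Complex.I_sq
  have hinv : (mphi y + Complex.I • 1)⁻¹
      = (mdet y)⁻¹ • !![(y 0:ℂ)-y 3+I, -((y 1:ℂ)-I*y 2); -((y 1:ℂ)+I*y 2), (y 0:ℂ)+y 3+I] := by
    rw [hA, Matrix.inv_def, Matrix.adjugate_fin_two, Matrix.det_fin_two_of, hd, Ring.inverse_eq_inv']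
    simp
  rw [mpsi, cayley, hB, hinv, Matrix.mul_smul]
  congr 1
  ext i j
  fin_cases i <;> fin_cases j
  · simp [Matrix.mul_apply, Fin.sum_univ_two, mnum, mq]
    linear_combination ((y 2:ℂ)^2 - 1) * Complex.I_sq
  · simp [Matrix.mul_apply, Fin.sum_univ_two, mnum, mq]
    ring
  · simp [Matrix.mul_apply, Fin.sum_univ_two, mnum, mq]
    ring
  · simp [Matrix.mul_apply, Fin.sum_univ_two, mnum, mq]
    linear_combination ((y 2:ℂ)^2 - 1) * Complex.I_sq

set_option maxHeartbeats 800000 in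
lemma aux (x : Fin 4 → ℝ) (D : ℝ) (hD : D = 1 - mq x - 2 * x 0) (h : D ≠ 0)
    (x' : Fin 4 → ℝ) (e0 : x' 0 = (1 + mq x) / D) (e1 : x' 1 = 2 * x 1 / D)
    (e2 : x' 2 = 2 * x 2 / D) (e3 : x' 3 = 2 * x 3 / D) :
    Complex.I • mpsi x = mpsi x' := by
  have hDc : (D : ℂ) ≠ 0 := by exact_mod_cast h
  have hsq : mq x' = (-(1 + mq x)^2 + 4*((x 1)^2 + (x 2)^2 + (x 3)^2)) / D^2 := by
    rw [show mq x' = -(x' 0)^2 + (x' 1)^2 + (x' 2)^2 + (x' 3)^2 from rfl, e0, e1, e2, e3]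
    ring
  have hq1 : 1 - mq x' = 2 * (1 - mq x) / D := by
    rw [hsq]
    field_simp
    rw [hD]; simp only [mq]; ring
  have hq2 : 1 + mq x' = -(4 * x 0) / D := by
    rw [hsq]
    field_simp
    rw [hD]; simp only [mq]; ring
  have key : 2 * mdet x = I * (D:ℂ) * mdet x' := by
    simp only [mdet]
    rw [e0, hq2]
    push_cast
    field_simp
    linear_combination (-2*(1+(mq x:ℂ))) * Complex.I_sq
  have hscale : mnum x' = ((2:ℂ)/(D:ℂ)) • mnum x := by
    ext i j
    fin_cases i <;> fin_cases j <;>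
    · simp only [mnum, Matrix.smul_apply, Matrix.cons_val', Matrix.cons_val_zero, Matrix.cons_val_one,
        Matrix.head_cons, Matrix.empty_val', Matrix.cons_val_fin_one, Matrix.of_apply, Matrix.head_fin_const,
        smul_eq_mul]
      rw [show ((mq x' : ℝ) : ℂ) = 1 - 2*((1 - mq x : ℝ):ℂ)/(D:ℂ) by
        have : ((1 - mq x' : ℝ) : ℂ) = 2*((1 - mq x : ℝ):ℂ)/(D:ℂ) := by rw [hq1]; push_cast; ring
        push_cast at this ⊢
        linear_combination -this]
      rw [e1, e2, e3]
      push_cast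
      field_simp
      all_goals ring
  rw [mpsi_eq x, mpsi_eq x', hscale, smul_smul, smul_smul]
  congr 1
  have h1 := mdet_ne x
  have h2 := mdet_ne x'
  field_simp
  linear_combination -key

theorem stmt4 (x : Fin 4 → ℝ) (h : 1 - mq x - 2 * x 0 ≠ 0) :
    Complex.I • mpsi x =
      mpsi ![(1 + mq x) / (1 - mq x - 2 * x 0),
             2 * x 1 / (1 - mq x - 2 * x 0),
             2 * x 2 / (1 - mq x - 2 * x 0),
             2 * x 3 / (1 - mq x - 2 * x 0)] := by
  exact aux x _ rfl h _ rfl rfl rfl rfl
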